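/- Let P be a finite bounded poset with |P| > 1 and b the blocker map on Ant(P). For each blocker B ∈ Antb(P), the greatest element of the preimage b⁻¹(B) (with respect to the order on Ant(P)) is b(B). -/

import Mathlib

open scoped Classical
open Set

/-- The order filter generated by a subset. -/
def upFilter (P : Type*) [Preorder P] (S : Set P) : Set P := {x | ∃ s ∈ S, s ≤ x}

/-- The set of minimal elements of a subset. -/
def minsOf (P : Type*) [Preorder P] (S : Set P) : Set P := {x | Minimal (· ∈ S) x}

/-- The set of intersecters for `A` in `P`. -/
def inters (P : Type*) [PartialOrder P] [OrderBot P] (A : Set P) : Set P :=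
  if A = ∅ then Set.univ
  else if A = {(⊥ : P)} then ∅
  else {b | ∀ a ∈ A, a ≠ ⊥ → ∃ z : P, IsAtom z ∧ z ≤ b ∧ z ≤ a}

/-- The set of complementers for `A` in `P`. -/
def compls (P : Type*) [PartialOrder P] [OrderBot P] (A : Set P) : Set P := (inters P A)ᶜ

/-- The blocker map: the set of minimal intersecters for `A` in `P`. -/
def bmap (P : Type*) [PartialOrder P] [OrderBot P] (A : Set P) : Set P := minsOf P (inters P A)

section Aux

variable {P : Type*} [PartialOrder P] [BoundedOrder P] [Fintype P] [Nontrivial P]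

/-- Unconditional version of `inters`. -/
def Jset (P : Type*) [PartialOrder P] [OrderBot P] (A : Set P) : Set P :=
  {b | ∀ a ∈ A, a ≠ ⊥ → ∃ z : P, IsAtom z ∧ z ≤ b ∧ z ≤ a}

lemma inters_eq_J {A : Set P} (h : A ≠ {⊥}) : inters P A = Jset P A := by
  unfold inters
  by_cases h0 : A = ∅
  · subst h0
    rw [if_pos rfl]
    ext x; simp [Jset]
  · rw [if_neg h0, if_neg h]; rfl

lemma exists_atom_le {a : P} (ha : a ≠ ⊥) : ∃ z : P, IsAtom z ∧ z ≤ a := by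
  haveI : IsAtomic P := isAtomic_of_orderBot_wellFounded_lt wellFounded_lt
  exact (IsAtomic.eq_bot_or_exists_atom_le a).resolve_left ha

lemma J_upper {A : Set P} : IsUpperSet (Jset P A) := by
  intro b c hbc hb a ha hane
  obtain ⟨z, hz, hzb, hza⟩ := hb a ha hane
  exact ⟨z, hz, hzb.trans hbc, hza⟩

lemma J_anti {A B : Set P} (h : A ⊆ B) : Jset P B ⊆ Jset P A :=
  fun c hc a ha hane => hc a (h ha) hane

lemma subset_JJ {A : Set P} {x : P} (hx : x ∈ A) (hxb : x ≠ ⊥) :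
    x ∈ Jset P (Jset P A) := by
  intro d hd _
  obtain ⟨z, hz, hzd, hzx⟩ := hd x hx hxb
  exact ⟨z, hz, hzx, hzd⟩

lemma bot_not_mem_J {A : Set P} (h : ∃ a ∈ A, a ≠ ⊥) : (⊥ : P) ∉ Jset P A := by
  obtain ⟨a, ha, hane⟩ := h
  intro hb
  obtain ⟨z, hz, hzb, _⟩ := hb a ha hane
  exact hz.1 (le_bot_iff.mp hzb)

lemma top_mem_J (A : Set P) : (⊤ : P) ∈ Jset P A := by
  intro a _ hane
  obtain ⟨z, hz, hza⟩ := exists_atom_le hane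
  exact ⟨z, hz, le_top, hza⟩

lemma minsOf_subset (S : Set P) : minsOf P S ⊆ S := fun _ hx => hx.1

lemma minsOf_antichain (S : Set P) : IsAntichain (· ≤ ·) (minsOf P S) := by
  intro a ha b hb hne hle
  exact hne (le_antisymm hle (hb.2 ha.1 hle))

lemma exists_min_le {S : Set P} {t : P} (ht : t ∈ S) : ∃ m ∈ minsOf P S, m ≤ t := by
  obtain ⟨m, hmt, hm⟩ := exists_minimal_le_of_wellFoundedLT (· ∈ S) t ht
  exact ⟨m, hm, hmt⟩

lemma upFilter_minsOf {S : Set P} (hS : IsUpperSet S) : upFilter P (minsOf P S) = S := by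
  ext x
  constructor
  · rintro ⟨m, hm, hmx⟩
    exact hS hmx hm.1
  · intro hx
    obtain ⟨m, hm, hmx⟩ := exists_min_le hx
    exact ⟨m, hm, hmx⟩

lemma J_minsOf {S : Set P} (hb : (⊥ : P) ∉ S) : Jset P (minsOf P S) = Jset P S := by
  apply Set.Subset.antisymm _ (J_anti (minsOf_subset S))
  intro c hc t ht htne
  obtain ⟨m, hm, hmt⟩ := exists_min_le ht
  have hmne : m ≠ ⊥ := fun h => hb (h ▸ hm.1)
  obtain ⟨z, hz, hzc, hzm⟩ := hc m hm hmne
  exact ⟨z, hz, hzc, hzm.trans hmt⟩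

lemma JJJ {A : Set P} (hbot : (⊥ : P) ∉ A) (hne : A.Nonempty) :
    Jset P (Jset P (Jset P A)) = Jset P A := by
  have hAJJ : A ⊆ Jset P (Jset P A) := fun x hx =>
    subset_JJ hx (fun h => hbot (h ▸ hx))
  apply Set.Subset.antisymm (J_anti hAJJ)
  intro x hx
  have hxbot : x ≠ ⊥ := by
    rintro rfl
    obtain ⟨a, ha⟩ := hne
    exact bot_not_mem_J ⟨a, ha, fun h => hbot (h ▸ ha)⟩ hx
  exact subset_JJ hx hxbot

lemma bmap_empty : bmap P (∅ : Set P) = {⊥} := by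
  unfold bmap inters
  rw [if_pos rfl]
  ext x
  simp only [minsOf, Set.mem_setOf_eq, Set.mem_singleton_iff]
  constructor
  · intro hx
    exact le_bot_iff.mp (hx.2 (Set.mem_univ (⊥ : P)) bot_le)
  · rintro rfl
    exact ⟨Set.mem_univ _, fun y _ _ => bot_le⟩

lemma bmap_bot : bmap P ({⊥} : Set P) = ∅ := by
  unfold bmap inters
  rw [if_neg (by simp), if_pos rfl]
  ext x
  simp [minsOf, Minimal]

/-- for a nonempty set not equal to {⊥} there is a non-bot element -/
lemma exists_ne_bot {A : Set P} (hne : A.Nonempty) (h : A ≠ {⊥}) :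
    ∃ a ∈ A, a ≠ ⊥ := by
  by_contra hc
  push_neg at hc
  apply h
  apply Set.Subset.antisymm (fun x hx => hc x hx)
  · intro x hx
    obtain ⟨a, ha⟩ := hne
    have := hc a ha
    rwa [hx, ← this]

end Aux

theorem stmt_15 {P : Type*} [PartialOrder P] [BoundedOrder P] [Fintype P] [Nontrivial P]
    (B : Set P) (hB : ∃ A : Set P, IsAntichain (· ≤ ·) A ∧ bmap P A = B) :
    IsAntichain (· ≤ ·) (bmap P B) ∧ bmap P (bmap P B) = B ∧
    ∀ A : Set P, IsAntichain (· ≤ ·) A → bmap P A = B →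
      upFilter P A ⊆ upFilter P (bmap P B) := by
  obtain ⟨A, hA, hAB⟩ := hB
  -- first, the general fact used in case 3: any antichain A' with bmap A' = B and B "proper"
  by_cases hA0 : A = ∅
  · -- B = {⊥}
    subst hA0
    rw [bmap_empty] at hAB
    subst hAB
    have h1 : bmap P ({⊥} : Set P) = ∅ := bmap_bot
    refine ⟨by rw [h1]; exact Set.pairwise_empty _, by rw [h1, bmap_empty], ?_⟩
    intro A' hA' hA'B
    rw [h1]
    intro x hx
    obtain ⟨s, hs, _⟩ := hx
    exfalso
    -- A' nonempty and bmap A' = {⊥}: contradiction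
    by_cases hA'1 : A' = {⊥}
    · rw [hA'1, bmap_bot] at hA'B
      exact (Set.singleton_ne_empty (⊥ : P)) hA'B.symm
    · have hbot : (⊥ : P) ∈ bmap P A' := by rw [hA'B]; rfl
      have hJ : inters P A' = Jset P A' := inters_eq_J hA'1
      have : (⊥ : P) ∈ Jset P A' := by
        rw [← hJ]; exact (minsOf_subset _) hbot
      exact bot_not_mem_J (exists_ne_bot ⟨s, hs⟩ hA'1) this
  by_cases hA1 : A = {⊥}
  · -- B = ∅
    subst hA1
    rw [bmap_bot] at hAB
    subst hAB
    have h1 : bmap P (∅ : Set P) = {⊥} := bmap_empty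
    refine ⟨by rw [h1]; exact Set.Subsingleton.isAntichain (by simp) _,
      by rw [h1, bmap_bot], ?_⟩
    intro A' _ _
    rw [h1]
    intro x _
    exact ⟨⊥, rfl, bot_le⟩
  -- main case
  have hAne : A.Nonempty := Set.nonempty_iff_ne_empty.mpr hA0
  have hAbot : (⊥ : P) ∉ A := by
    intro hbA
    obtain ⟨a, ha, hane⟩ := exists_ne_bot hAne hA1
    exact hA hbA ha (Ne.symm hane) bot_le
  have hJA : inters P A = Jset P A := inters_eq_J hA1
  have hJAbot : (⊥ : P) ∉ Jset P A :=
    bot_not_mem_J (exists_ne_bot hAne hA1)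
  have hBdef : B = minsOf P (Jset P A) := by rw [← hAB, bmap, hJA]
  have hBsub : B ⊆ Jset P A := hBdef ▸ minsOf_subset _
  have hBbot : (⊥ : P) ∉ B := fun h => hJAbot (hBsub h)
  have hBne : B.Nonempty := by
    obtain ⟨m, hm, _⟩ := exists_min_le (top_mem_J A (P := P))
    exact ⟨m, hBdef ▸ hm⟩
  have hB1 : B ≠ {⊥} := fun h => hBbot (h ▸ rfl)
  have hB0 : B ≠ ∅ := Set.nonempty_iff_ne_empty.mp hBne
  have hJB : inters P B = Jset P B := inters_eq_J hB1
  have hJBeq : Jset P B = Jset P (Jset P A) := by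
    rw [hBdef]; exact J_minsOf hJAbot
  have hJBbot : (⊥ : P) ∉ Jset P B := bot_not_mem_J (exists_ne_bot hBne hB1)
  -- C = bmap B
  have hCdef : bmap P B = minsOf P (Jset P B) := by rw [bmap, hJB]
  have hCsub : bmap P B ⊆ Jset P B := hCdef ▸ minsOf_subset _
  have hCbot : (⊥ : P) ∉ bmap P B := fun h => hJBbot (hCsub h)
  have hCne : (bmap P B).Nonempty := by
    obtain ⟨m, hm, _⟩ := exists_min_le (top_mem_J B (P := P))
    exact ⟨m, hCdef ▸ hm⟩
  have hC1 : bmap P B ≠ {⊥} := fun h => hCbot (h ▸ rfl)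
  refine ⟨hCdef ▸ minsOf_antichain _, ?_, ?_⟩
  · -- bmap (bmap B) = B
    rw [bmap, inters_eq_J hC1, hCdef, J_minsOf hJBbot, hJBeq,
      JJJ hAbot hAne, ← hBdef]
  · intro A' hA' hA'B
    have hA'0 : A' ≠ ∅ := by
      rintro rfl
      rw [bmap_empty] at hA'B
      exact hBbot (hA'B ▸ rfl)
    have hA'1 : A' ≠ {⊥} := by
      rintro rfl
      rw [bmap_bot] at hA'B
      exact hB0 hA'B.symm
    have hA'ne : A'.Nonempty := Set.nonempty_iff_ne_empty.mpr hA'0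
    have hA'bot : (⊥ : P) ∉ A' := by
      intro hbA
      obtain ⟨a, ha, hane⟩ := exists_ne_bot hA'ne hA'1
      exact hA' hbA ha (Ne.symm hane) bot_le
    have hJA'bot : (⊥ : P) ∉ Jset P A' := bot_not_mem_J (exists_ne_bot hA'ne hA'1)
    have hB'def : B = minsOf P (Jset P A') := by rw [← hA'B, bmap, inters_eq_J hA'1]
    have hJB' : Jset P B = Jset P (Jset P A') := by
      rw [hB'def]; exact J_minsOf hJA'bot
    have hup : upFilter P (bmap P B) = Jset P B := by
      rw [hCdef]; exact upFilter_minsOf J_upper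
    rw [hup, hJB']
    rintro x ⟨s, hs, hsx⟩
    exact J_upper hsx (subset_JJ hs (fun h => hA'bot (h ▸ hs)))
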